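/- Let α ≥ 1 and c ∈ [0,1) and let v : 2^M → ℝ≥0 be a monotone α-submodular valuation with curvature c, meaning v(j | S) ≥ (1−c)·v(j | ∅) for every j ∈ M and S ⊆ M with j ∉ S. Define the linear valuation ℓ(S) := (1−c)·(v(∅) + Σ_{j∈S} v(j | ∅)). Then v is ε-close to ℓ for ε = (α−1+c)/(1−c); that is, ℓ(S) ≤ v(S) ≤ (α/(1−c))·ℓ(S) for every S ⊆ M. -/

import Mathlib

/-- Observation: bounded curvature implies closeness to linear.
Let `v` be a monotone `α`-submodular valuation (`α ≥ 1`) with curvature `c ∈ [0,1)`: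
`v(j|S) ≥ (1−c)·v(j|∅)` for all `j ∉ S`.  Define the linear valuation
`ℓ(S) = (1−c)·(v(∅) + Σ_{j∈S} v(j|∅))`.  Then `v` is `ε`-close to `ℓ` for
`ε = (α−1+c)/(1−c)`, i.e. `ℓ(S) ≤ v(S) ≤ (α/(1−c))·ℓ(S)` for every `S`
(note `1 + (α−1+c)/(1−c) = α/(1−c)`). -/
theorem curvature_close_to_linear
    {M : Type*} [Fintype M] [DecidableEq M]
    (α c : ℝ) (hα : 1 ≤ α) (hc0 : 0 ≤ c) (hc1 : c < 1)
    (v : Finset M → ℝ)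
    (hv : ∀ S : Finset M, 0 ≤ v S)
    (hmono : ∀ S T : Finset M, S ⊆ T → v S ≤ v T)
    (hsub : ∀ S T : Finset M, S ⊆ T → ∀ j : M, j ∉ T →
      α * (v (insert j S) - v S) ≥ v (insert j T) - v T)
    (hcurv : ∀ (j : M) (S : Finset M), j ∉ S →
      v (insert j S) - v S ≥ (1 - c) * (v {j} - v ∅))
    (ℓ : Finset M → ℝ)
    (hℓ : ∀ S : Finset M, ℓ S = (1 - c) * (v ∅ + ∑ j ∈ S, (v {j} - v ∅)))
    (S : Finset M) :
    ℓ S ≤ v S ∧ v S ≤ (α / (1 - c)) * ℓ S := by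
  have h1c : (0:ℝ) < 1 - c := by linarith
  have key : ∀ T : Finset M,
      (1 - c) * (v ∅ + ∑ j ∈ T, (v {j} - v ∅)) ≤ v T ∧
      v T ≤ v ∅ + α * ∑ j ∈ T, (v {j} - v ∅) := by
    intro T
    induction T using Finset.induction_on with
    | empty =>
      constructor
      · simp only [Finset.sum_empty]
        nlinarith [hv (∅ : Finset M)]
      · simp
    | @insert j T hj ih =>
      rw [Finset.sum_insert hj]
      constructor
      · have := hcurv j T hj
        nlinarith [ih.1]
      · have := hsub ∅ T (Finset.empty_subset T) j hj
        have h2 : insert j (∅ : Finset M) = {j} := rfl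
        rw [h2] at this
        nlinarith [ih.2]
  have hsum : 0 ≤ ∑ j ∈ S, (v {j} - v ∅) := by
    apply Finset.sum_nonneg
    intro j _
    have := hmono ∅ {j} (Finset.empty_subset _)
    linarith
  rw [hℓ]
  refine ⟨(key S).1, ?_⟩
  have : (α / (1 - c)) * ((1 - c) * (v ∅ + ∑ j ∈ S, (v {j} - v ∅)))
      = α * (v ∅ + ∑ j ∈ S, (v {j} - v ∅)) := by
    field_simp
  rw [this]
  have := (key S).2
  nlinarith [hv (∅ : Finset M)]
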